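/- Let a > 0, k = 1, (λ_p)_{p≥1} a sequence of positive reals with λ_p ≥ λ₁ > 0 for all p, (c₀ₚ), (c₁ₚ) real sequences, and for each p let f_p : [0,a] → ℝ be continuous. Define u_p : [0,a] → ℝ by u_p(x) = cosh(√λ_p x)·c₀ₚ + (sinh(√λ_p x)/√λ_p)·c₁ₚ + ∫₀ˣ (sinh(√λ_p (x−ξ))/√λ_p)·f_p(ξ) dξ. Then for every x ∈ [0,a], Σ_{p=1}^∞ λ_p·e^{2√λ_p (a−x)}·( u_p(x) + u_p'(x)/√λ_p )² ≤ 3·Σ_{p=1}^∞ (1+λ_p)·u_p(a)² + 3·Σ_{p=1}^∞ u_p'(a)² + (3/2)·λ₁^{−1/2}·∫₀ᵃ Σ_{p=1}^∞ e^{2√λ_p a}·f_p(ξ)² dξ, where the sums of nonnegative terms are interpreted in [0,∞]. -/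

import Mathlib

open MeasureTheory Set
open scoped ENNReal

/-- Cauchy–Schwarz for integrals of real functions. -/
lemma cs_aux {ν : Measure ℝ} [IsFiniteMeasure ν] {g h : ℝ → ℝ}
    (hg : MemLp g 2 ν) (hh : MemLp h 2 ν) :
    (∫ t, g t * h t ∂ν) ^ 2 ≤ (∫ t, g t ^ 2 ∂ν) * (∫ t, h t ^ 2 ∂ν) := by
  have hpq : Real.HolderConjugate 2 2 := ⟨by norm_num, by norm_num, by norm_num⟩
  have h2 : ENNReal.ofReal (2 : ℝ) = 2 := by norm_num
  have key := MeasureTheory.integral_mul_le_Lp_mul_Lq_of_nonneg hpq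
      (f := fun t => |g t|) (g := fun t => |h t|)
      (Filter.Eventually.of_forall fun t => abs_nonneg _)
      (Filter.Eventually.of_forall fun t => abs_nonneg _)
      (h2 ▸ hg.abs) (h2 ▸ hh.abs)
  have e1 : ∀ (g : ℝ → ℝ), (∫ t, |g t| ^ (2:ℝ) ∂ν) = ∫ t, g t ^ 2 ∂ν := by
    intro g; refine integral_congr_ae (Filter.Eventually.of_forall fun t => ?_)
    show |g t| ^ (2:ℝ) = g t ^ 2
    rw [show ((2:ℝ) = ((2:ℕ):ℝ)) by norm_num, Real.rpow_natCast, sq_abs]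
  rw [e1, e1] at key
  have habs : |∫ t, g t * h t ∂ν| ≤ ∫ t, |g t| * |h t| ∂ν := by
    rw [← Real.norm_eq_abs]
    refine (norm_integral_le_integral_norm _).trans_eq ?_
    simp [Real.norm_eq_abs, abs_mul]
  have hA : (0:ℝ) ≤ ∫ t, g t ^ 2 ∂ν := integral_nonneg fun t => sq_nonneg _
  have hB : (0:ℝ) ≤ ∫ t, h t ^ 2 ∂ν := integral_nonneg fun t => sq_nonneg _
  calc (∫ t, g t * h t ∂ν) ^ 2 = |∫ t, g t * h t ∂ν| ^ 2 := (sq_abs _).symm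
    _ ≤ ((∫ t, g t ^ 2 ∂ν) ^ ((1:ℝ)/2) * (∫ t, h t ^ 2 ∂ν) ^ ((1:ℝ)/2)) ^ 2 := by
        exact pow_le_pow_left₀ (abs_nonneg _) (habs.trans key) 2
    _ = (∫ t, g t ^ 2 ∂ν) * (∫ t, h t ^ 2 ∂ν) := by
        rw [mul_pow, ← Real.rpow_natCast (_ ^ ((1:ℝ)/2)) 2, ← Real.rpow_natCast (_ ^ ((1:ℝ)/2)) 2,
          ← Real.rpow_mul hA, ← Real.rpow_mul hB]
        norm_num

/-- FTC for continuous integrand. -/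
lemma ftc_aux {g : ℝ → ℝ} (hg : Continuous g) (y : ℝ) :
    HasDerivAt (fun t => ∫ ξ in (0:ℝ)..t, g ξ) (g y) y :=
  intervalIntegral.integral_hasDerivAt_right (hg.intervalIntegrable _ _)
    hg.stronglyMeasurable.stronglyMeasurableAtFilter hg.continuousAt

set_option maxHeartbeats 2000000

/-- Regularity bound of Theorem 2.1 in the case `k = 1`, in Fourier-coefficient
form; sums of nonnegative terms are taken in `[0,∞]`. -/
theorem stmt_8 (a : ℝ) (ha : 0 < a)
    (lam : ℕ → ℝ) (lam₁ : ℝ) (hlam₁ : 0 < lam₁) (hlam : ∀ p, lam₁ ≤ lam p)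
    (c₀ c₁ : ℕ → ℝ)
    (f : ℕ → ℝ → ℝ) (hf : ∀ p, ContinuousOn (f p) (Icc 0 a))
    (u u' : ℕ → ℝ → ℝ)
    (hu : ∀ p x, u p x =
      Real.cosh (Real.sqrt (lam p) * x) * c₀ p +
      Real.sinh (Real.sqrt (lam p) * x) / Real.sqrt (lam p) * c₁ p +
      ∫ ξ in (0:ℝ)..x,
        Real.sinh (Real.sqrt (lam p) * (x - ξ)) / Real.sqrt (lam p) * f p ξ)
    (hu' : ∀ p, ∀ x ∈ Icc (0:ℝ) a, HasDerivWithinAt (u p) (u' p x) (Icc 0 a) x) :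
    ∀ x ∈ Icc (0:ℝ) a,
      (∑' p : ℕ, ENNReal.ofReal
          (lam p * Real.exp (2 * Real.sqrt (lam p) * (a - x)) *
            (u p x + u' p x / Real.sqrt (lam p)) ^ 2)) ≤
        3 * (∑' p : ℕ, ENNReal.ofReal ((1 + lam p) * (u p a) ^ 2)) +
        3 * (∑' p : ℕ, ENNReal.ofReal ((u' p a) ^ 2)) +
        (3 / 2 : ℝ≥0∞) * ENNReal.ofReal (lam₁ ^ (-(1 : ℝ) / 2)) *
          ∫⁻ ξ in Icc (0:ℝ) a, ∑' p : ℕ, ENNReal.ofReal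
            (Real.exp (2 * Real.sqrt (lam p) * a) * (f p ξ) ^ 2) := by
  intro x hx
  obtain ⟨hx0, hxa⟩ := hx
  have hcl_cont : Continuous (fun t : ℝ => max 0 (min t a)) :=
    continuous_const.max (continuous_id.min continuous_const)
  have hcl_mem : ∀ t : ℝ, max 0 (min t a) ∈ Icc (0:ℝ) a := fun t =>
    ⟨le_max_left _ _, max_le ha.le (min_le_right _ _)⟩
  have hcl_eq : ∀ t ∈ Icc (0:ℝ) a, max 0 (min t a) = t := fun t ht => by
    rw [min_eq_left ht.2, max_eq_right ht.1]
  -- the per-`p` real inequality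
  have key : ∀ p : ℕ,
      lam p * Real.exp (2 * Real.sqrt (lam p) * (a - x)) *
        (u p x + u' p x / Real.sqrt (lam p)) ^ 2 ≤
      3 * ((1 + lam p) * (u p a) ^ 2) + 3 * (u' p a) ^ 2 +
        (3/2) * lam₁ ^ (-(1:ℝ)/2) *
          ∫ ξ in Icc (0:ℝ) a, Real.exp (2 * Real.sqrt (lam p) * a) * (f p ξ) ^ 2 := by
    intro p
    set μ := Real.sqrt (lam p) with hμdef
    have hlamp : 0 < lam p := lt_of_lt_of_le hlam₁ (hlam p)
    have hμ : 0 < μ := Real.sqrt_pos.2 hlamp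
    have hμsq : μ ^ 2 = lam p := Real.sq_sqrt hlamp.le
    set F : ℝ → ℝ := fun t => f p (max 0 (min t a)) with hFdef
    have hF : Continuous F := (hf p).comp_continuous hcl_cont hcl_mem
    have hFeq : ∀ t ∈ Icc (0:ℝ) a, F t = f p t := fun t ht => by
      simp only [hFdef, hcl_eq t ht]
    have hcA : Continuous fun ξ => Real.cosh (μ * ξ) * F ξ :=
      (Real.continuous_cosh.comp (continuous_const.mul continuous_id)).mul hF
    have hcB : Continuous fun ξ => Real.sinh (μ * ξ) * F ξ :=
      (Real.continuous_sinh.comp (continuous_const.mul continuous_id)).mul hF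
    have hcE : Continuous fun ξ => Real.exp (-(μ * ξ)) * F ξ :=
      (Real.continuous_exp.comp (continuous_const.mul continuous_id).neg).mul hF
    set A : ℝ → ℝ := fun t => ∫ ξ in (0:ℝ)..t, Real.cosh (μ * ξ) * F ξ with hAdef
    set B : ℝ → ℝ := fun t => ∫ ξ in (0:ℝ)..t, Real.sinh (μ * ξ) * F ξ with hBdef
    set E : ℝ → ℝ := fun t => ∫ ξ in (0:ℝ)..t, Real.exp (-(μ * ξ)) * F ξ with hEdef
    -- Step (a): closed form of `u p` on `Icc 0 a`
    have hG : ∀ y ∈ Icc (0:ℝ) a, u p y =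
        Real.cosh (μ*y) * c₀ p + Real.sinh (μ*y)/μ * c₁ p +
          (Real.sinh (μ*y)/μ * A y - Real.cosh (μ*y)/μ * B y) := by
      intro y hy
      rw [hu p y]
      have h1 : (∫ ξ in (0:ℝ)..y, Real.sinh (μ*(y-ξ))/μ * f p ξ)
          = ∫ ξ in (0:ℝ)..y, (Real.sinh (μ*y)/μ * (Real.cosh (μ*ξ) * F ξ)
              - Real.cosh (μ*y)/μ * (Real.sinh (μ*ξ) * F ξ)) := by
        refine intervalIntegral.integral_congr fun ξ hξ => ?_
        have hξ' : ξ ∈ Icc (0:ℝ) a := by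
          rw [uIcc_of_le hy.1] at hξ; exact ⟨hξ.1, hξ.2.trans hy.2⟩
        show Real.sinh (μ*(y-ξ))/μ * f p ξ = _
        rw [← hFeq ξ hξ', mul_sub, Real.sinh_sub]
        ring
      rw [h1, intervalIntegral.integral_sub
        (show IntervalIntegrable
          (fun ξ => Real.sinh (μ*y)/μ * (Real.cosh (μ*ξ) * F ξ)) volume 0 y from
          (continuous_const.mul hcA).intervalIntegrable _ _)
        (show IntervalIntegrable
          (fun ξ => Real.cosh (μ*y)/μ * (Real.sinh (μ*ξ) * F ξ)) volume 0 y from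
          (continuous_const.mul hcB).intervalIntegrable _ _),
        intervalIntegral.integral_const_mul, intervalIntegral.integral_const_mul]
    -- Step (b): derivative of the closed form
    have hG' : ∀ y, HasDerivAt (fun y => Real.cosh (μ*y) * c₀ p + Real.sinh (μ*y)/μ * c₁ p +
          (Real.sinh (μ*y)/μ * A y - Real.cosh (μ*y)/μ * B y))
        (μ * Real.sinh (μ*y) * c₀ p + Real.cosh (μ*y) * c₁ p +
          (Real.cosh (μ*y) * A y - Real.sinh (μ*y) * B y)) y := by
      intro y
      have hid : HasDerivAt (fun t : ℝ => μ * t) μ y := by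
        simpa using (hasDerivAt_id y).const_mul μ
      have hs : HasDerivAt (fun t => Real.sinh (μ*t)) (Real.cosh (μ*y) * μ) y := hid.sinh
      have hc : HasDerivAt (fun t => Real.cosh (μ*t)) (Real.sinh (μ*y) * μ) y := hid.cosh
      have hA' : HasDerivAt A (Real.cosh (μ*y) * F y) y := ftc_aux hcA y
      have hB' : HasDerivAt B (Real.sinh (μ*y) * F y) y := ftc_aux hcB y
      have htot := ((hc.mul_const (c₀ p)).add ((hs.div_const μ).mul_const (c₁ p))).add
        (((hs.div_const μ).mul hA').sub ((hc.div_const μ).mul hB'))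
      refine htot.congr_deriv ?_
      field_simp
      ring
    have hu'eq : ∀ y ∈ Icc (0:ℝ) a, u' p y =
        μ * Real.sinh (μ*y) * c₀ p + Real.cosh (μ*y) * c₁ p +
          (Real.cosh (μ*y) * A y - Real.sinh (μ*y) * B y) := by
      intro y hy
      refine UniqueDiffWithinAt.eq_deriv _ (uniqueDiffOn_Icc ha y hy) (hu' p y hy) ?_
      exact ((hG' y).hasDerivWithinAt).congr (fun t ht => hG t ht) (hG y hy)
    have hAB : ∀ y, A y - B y = E y := by
      intro y
      rw [hAdef, hBdef, hEdef]
      show (∫ ξ in (0:ℝ)..y, Real.cosh (μ * ξ) * F ξ) -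
          (∫ ξ in (0:ℝ)..y, Real.sinh (μ * ξ) * F ξ) = _
      rw [← intervalIntegral.integral_sub (hcA.intervalIntegrable _ _)
        (hcB.intervalIntegrable _ _)]
      refine intervalIntegral.integral_congr fun ξ _ => ?_
      show Real.cosh (μ * ξ) * F ξ - Real.sinh (μ * ξ) * F ξ = _
      rw [← sub_mul, Real.cosh_sub_sinh]
    -- Step (c): exponential form of `μ u + u'`
    have hD : ∀ y ∈ Icc (0:ℝ) a, μ * u p y + u' p y
        = Real.exp (μ*y) * (μ * c₀ p + c₁ p + E y) := by
      intro y hy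
      rw [hG y hy, hu'eq y hy]
      linear_combination (μ * c₀ p + c₁ p + (A y - B y)) * Real.cosh_add_sinh (μ*y)
        + Real.exp (μ*y) * hAB y
        + (Real.sinh (μ*y) * (c₁ p + A y) - Real.cosh (μ*y) * B y) * mul_inv_cancel₀ hμ.ne'
    -- Step (d): the key identity
    set I : ℝ := ∫ ξ in x..a, Real.exp (μ*(a-ξ)) * F ξ with hIdef
    have hE_split : E a - E x = ∫ ξ in x..a, Real.exp (-(μ*ξ)) * F ξ := by
      have hint1 : IntervalIntegrable (fun ξ => Real.exp (-(μ*ξ)) * F ξ) volume 0 x :=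
        hcE.intervalIntegrable _ _
      have hint2 : IntervalIntegrable (fun ξ => Real.exp (-(μ*ξ)) * F ξ) volume x a :=
        hcE.intervalIntegrable _ _
      have h := intervalIntegral.integral_add_adjacent_intervals hint1 hint2
      rw [hEdef]
      show (∫ ξ in (0:ℝ)..a, Real.exp (-(μ*ξ)) * F ξ) -
        (∫ ξ in (0:ℝ)..x, Real.exp (-(μ*ξ)) * F ξ) = _
      linarith [h]
    have hI : Real.exp (μ*a) * (E a - E x) = I := by
      rw [hE_split, hIdef, ← intervalIntegral.integral_const_mul]
      refine intervalIntegral.integral_congr fun ξ _ => ?_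
      show Real.exp (μ*a) * (Real.exp (-(μ*ξ)) * F ξ) = _
      rw [← mul_assoc, ← Real.exp_add]
      ring_nf
    have hexp : Real.exp (μ*(a-x)) * Real.exp (μ*x) = Real.exp (μ*a) := by
      rw [← Real.exp_add]; ring_nf
    have hkey : Real.exp (μ*(a-x)) * (μ * u p x + u' p x)
        = (μ * u p a + u' p a) - I := by
      rw [hD x ⟨hx0, hxa⟩, hD a (right_mem_Icc.2 ha.le), ← hI]
      linear_combination (μ * c₀ p + c₁ p + E x) * hexp
    -- Step (e): the quadratic estimate
    have hLHS : lam p * Real.exp (2*μ*(a-x)) * (u p x + u' p x / μ)^2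
        = ((μ * u p a + u' p a) - I)^2 := by
      rw [← hkey]
      have h2exp : Real.exp (2*μ*(a-x)) = Real.exp (μ*(a-x))^2 := by
        rw [sq, ← Real.exp_add]; ring_nf
      rw [← hμsq, h2exp]
      field_simp
    have hsq : ((μ * u p a + u' p a) - I)^2
        ≤ 3*(μ * u p a)^2 + 3*(u' p a)^2 + 3*I^2 := by
      nlinarith [sq_nonneg (μ * u p a - u' p a), sq_nonneg (μ * u p a + I),
        sq_nonneg (u' p a + I)]
    have hua : (μ * u p a)^2 ≤ (1 + lam p) * (u p a)^2 := by
      nlinarith [sq_nonneg (u p a), hμsq]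
    -- the integral bound for `I`
    have hJnn : (0:ℝ) ≤ ∫ ξ in Icc (0:ℝ) a, (f p ξ)^2 :=
      setIntegral_nonneg measurableSet_Icc fun ξ _ => sq_nonneg _
    have hI2 : I^2 ≤ ((2*μ)⁻¹ * Real.exp (2*μ*a)) * ∫ ξ in Icc (0:ℝ) a, (f p ξ)^2 := by
      have hg_cont : Continuous fun ξ : ℝ => Real.exp (μ*(a-ξ)) :=
        Real.continuous_exp.comp (continuous_const.mul (continuous_const.sub continuous_id))
      have hgm : MemLp (fun ξ : ℝ => Real.exp (μ*(a-ξ))) 2 (volume.restrict (Ioc x a)) := by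
        refine MemLp.of_bound hg_cont.aestronglyMeasurable (Real.exp (μ*a)) ?_
        refine (ae_restrict_iff' measurableSet_Ioc).2 (Filter.Eventually.of_forall fun ξ hξ => ?_)
        rw [Real.norm_eq_abs, abs_of_pos (Real.exp_pos _)]
        exact Real.exp_le_exp.2
          (mul_le_mul_of_nonneg_left (by linarith [hξ.1]) hμ.le)
      have hFm : MemLp F 2 (volume.restrict (Ioc x a)) := by
        obtain ⟨C, hC⟩ := isCompact_Icc.exists_bound_of_continuousOn (hf p)
        exact MemLp.of_bound hF.aestronglyMeasurable C
          (Filter.Eventually.of_forall fun t => hC _ (hcl_mem t))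
      have hcs := cs_aux hgm hFm
      have hIset : I = ∫ ξ in Ioc x a, Real.exp (μ*(a-ξ)) * F ξ := by
        rw [hIdef, intervalIntegral.integral_of_le hxa]
      have hg2 : (∫ t in Ioc x a, (Real.exp (μ*(a-t)))^2)
          ≤ (2*μ)⁻¹ * Real.exp (2*μ*a) := by
        have h1 : (∫ t in Ioc x a, (Real.exp (μ*(a-t)))^2)
            = ∫ t in x..a, Real.exp (2*μ*(a-t)) := by
          rw [intervalIntegral.integral_of_le hxa]
          refine setIntegral_congr_fun measurableSet_Ioc fun t _ => ?_
          rw [sq, ← Real.exp_add]; ring_nf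
        have hder : ∀ t ∈ uIcc x a,
            HasDerivAt (fun t => -(2*μ)⁻¹ * Real.exp (2*μ*(a-t)))
              (Real.exp (2*μ*(a-t))) t := by
          intro t _
          have h0 : HasDerivAt (fun t : ℝ => 2*μ*(a-t)) (-(2*μ)) t := by
            simpa using ((hasDerivAt_id t).const_sub a).const_mul (2*μ)
          have h3 := h0.exp.const_mul (-(2*μ)⁻¹)
          refine h3.congr_deriv ?_
          field_simp
        have h2 : (∫ t in x..a, Real.exp (2*μ*(a-t)))
            = (2*μ)⁻¹ * (Real.exp (2*μ*(a-x)) - 1) := by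
          rw [intervalIntegral.integral_eq_sub_of_hasDerivAt hder
            ((Real.continuous_exp.comp
              (continuous_const.mul (continuous_const.sub continuous_id))).intervalIntegrable _ _)]
          rw [sub_self, mul_zero, Real.exp_zero]
          ring
        rw [h1, h2]
        have h4 : Real.exp (2*μ*(a-x)) ≤ Real.exp (2*μ*a) :=
          Real.exp_le_exp.2 (mul_le_mul_of_nonneg_left (by linarith) (by positivity))
        have h5 : (0:ℝ) < (2*μ)⁻¹ := by positivity
        nlinarith [Real.exp_pos (2*μ*a)]
      have hF2 : (∫ t in Ioc x a, F t^2) ≤ ∫ ξ in Icc (0:ℝ) a, (f p ξ)^2 := by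
        have h1 : (∫ ξ in Icc (0:ℝ) a, (f p ξ)^2) = ∫ t in Ioc (0:ℝ) a, F t^2 := by
          rw [integral_Icc_eq_integral_Ioc]
          refine setIntegral_congr_fun measurableSet_Ioc fun t ht => ?_
          rw [hFeq t (Ioc_subset_Icc_self ht)]
        rw [h1]
        refine setIntegral_mono_set ((hF.pow 2).integrableOn_Ioc)
          (Filter.Eventually.of_forall fun t => sq_nonneg _)
          (HasSubset.Subset.eventuallyLE (Ioc_subset_Ioc_left hx0))
      have hg2nn : (0:ℝ) ≤ ∫ t in Ioc x a, (Real.exp (μ*(a-t)))^2 :=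
        setIntegral_nonneg measurableSet_Ioc fun t _ => sq_nonneg _
      have hF2nn : (0:ℝ) ≤ ∫ t in Ioc x a, F t^2 :=
        setIntegral_nonneg measurableSet_Ioc fun t _ => sq_nonneg _
      calc I^2 = (∫ ξ in Ioc x a, Real.exp (μ*(a-ξ)) * F ξ)^2 := by rw [hIset]
        _ ≤ (∫ t in Ioc x a, (Real.exp (μ*(a-t)))^2) * (∫ t in Ioc x a, F t^2) := hcs
        _ ≤ ((2*μ)⁻¹ * Real.exp (2*μ*a)) * ∫ ξ in Icc (0:ℝ) a, (f p ξ)^2 := by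
            exact mul_le_mul hg2 hF2 hF2nn (by positivity)
    have hrpow : lam₁ ^ (-(1:ℝ)/2) = (Real.sqrt lam₁)⁻¹ := by
      rw [show (-(1:ℝ)/2) = -((1:ℝ)/2) by norm_num, Real.rpow_neg hlam₁.le,
        ← Real.sqrt_eq_rpow]
    have hμinv : (2*μ)⁻¹ ≤ (1/2) * lam₁ ^ (-(1:ℝ)/2) := by
      rw [hrpow]
      have h1 : 0 < Real.sqrt lam₁ := Real.sqrt_pos.2 hlam₁
      have h2 : Real.sqrt lam₁ ≤ μ := Real.sqrt_le_sqrt (hlam p)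
      rw [mul_inv]
      have h3 : μ⁻¹ ≤ (Real.sqrt lam₁)⁻¹ := inv_anti₀ h1 h2
      nlinarith
    have hconst : (∫ ξ in Icc (0:ℝ) a, Real.exp (2*μ*a) * (f p ξ)^2)
        = Real.exp (2*μ*a) * ∫ ξ in Icc (0:ℝ) a, (f p ξ)^2 :=
      integral_const_mul _ _
    have e_pos := Real.exp_pos (2*μ*a)
    have h5 : (2*μ)⁻¹ * (Real.exp (2*μ*a) * ∫ ξ in Icc (0:ℝ) a, (f p ξ)^2)
        ≤ ((1/2) * lam₁ ^ (-(1:ℝ)/2)) * (Real.exp (2*μ*a) * ∫ ξ in Icc (0:ℝ) a, (f p ξ)^2) :=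
      mul_le_mul_of_nonneg_right hμinv (mul_nonneg e_pos.le hJnn)
    rw [hLHS, hconst]
    nlinarith [hsq, hua, hI2, h5]
  -- ENNReal assembly
  have hmeas : ∀ p : ℕ, AEMeasurable
      (fun ξ => ENNReal.ofReal (Real.exp (2 * Real.sqrt (lam p) * a) * (f p ξ) ^ 2))
      (volume.restrict (Icc (0:ℝ) a)) := fun p =>
    (((((hf p).aemeasurable measurableSet_Icc)).pow_const 2).const_mul _).ennreal_ofReal
  have hc_nn : 0 ≤ lam₁ ^ (-(1:ℝ)/2) := Real.rpow_nonneg hlam₁.le _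
  have h32 : ENNReal.ofReal ((3:ℝ)/2) = 3/2 := by
    rw [ENNReal.ofReal_div_of_pos (by norm_num)]
    norm_num
  have h3 : ENNReal.ofReal (3:ℝ) = 3 := by norm_num
  have keyE : ∀ p : ℕ, ENNReal.ofReal (lam p * Real.exp (2 * Real.sqrt (lam p) * (a - x)) *
        (u p x + u' p x / Real.sqrt (lam p)) ^ 2)
      ≤ 3 * ENNReal.ofReal ((1 + lam p) * (u p a) ^ 2) + 3 * ENNReal.ofReal ((u' p a) ^ 2)
        + ((3/2 : ℝ≥0∞) * ENNReal.ofReal (lam₁ ^ (-(1:ℝ)/2))) *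
            ∫⁻ ξ in Icc (0:ℝ) a,
              ENNReal.ofReal (Real.exp (2 * Real.sqrt (lam p) * a) * (f p ξ)^2) := by
    intro p
    have hJint : Integrable (fun ξ => Real.exp (2 * Real.sqrt (lam p) * a) * (f p ξ)^2)
        (volume.restrict (Icc (0:ℝ) a)) :=
      (continuousOn_const.mul ((hf p).pow 2)).integrableOn_Icc
    have hJnn' : 0 ≤ᵐ[volume.restrict (Icc (0:ℝ) a)]
        fun ξ => Real.exp (2 * Real.sqrt (lam p) * a) * (f p ξ)^2 :=
      Filter.Eventually.of_forall fun ξ => mul_nonneg (Real.exp_pos _).le (sq_nonneg _)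
    have hlint := MeasureTheory.ofReal_integral_eq_lintegral_ofReal hJint hJnn'
    have hIcc_nn : (0:ℝ) ≤ ∫ ξ in Icc (0:ℝ) a, Real.exp (2 * Real.sqrt (lam p) * a) * (f p ξ)^2 :=
      setIntegral_nonneg measurableSet_Icc fun ξ _ => mul_nonneg (Real.exp_pos _).le (sq_nonneg _)
    have hZnn : (0:ℝ) ≤ (3/2) * lam₁ ^ (-(1:ℝ)/2) *
        ∫ ξ in Icc (0:ℝ) a, Real.exp (2 * Real.sqrt (lam p) * a) * (f p ξ)^2 :=
      mul_nonneg (mul_nonneg (by norm_num) hc_nn) hIcc_nn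
    have hlamp : 0 < lam p := lt_of_lt_of_le hlam₁ (hlam p)
    refine (ENNReal.ofReal_le_ofReal (key p)).trans (le_of_eq ?_)
    rw [ENNReal.ofReal_add (by positivity) hZnn,
      ENNReal.ofReal_add (by positivity) (by positivity),
      ENNReal.ofReal_mul (by norm_num : (0:ℝ) ≤ 3),
      ENNReal.ofReal_mul (by norm_num : (0:ℝ) ≤ 3),
      mul_assoc (3/2 : ℝ) _ _,
      ENNReal.ofReal_mul (by norm_num : (0:ℝ) ≤ 3/2),
      ENNReal.ofReal_mul hc_nn, hlint, h3, h32]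
    ring
  calc (∑' p : ℕ, ENNReal.ofReal (lam p * Real.exp (2 * Real.sqrt (lam p) * (a - x)) *
          (u p x + u' p x / Real.sqrt (lam p)) ^ 2))
      ≤ ∑' p : ℕ, (3 * ENNReal.ofReal ((1 + lam p) * (u p a) ^ 2)
          + 3 * ENNReal.ofReal ((u' p a) ^ 2)
          + ((3/2 : ℝ≥0∞) * ENNReal.ofReal (lam₁ ^ (-(1:ℝ)/2))) *
              ∫⁻ ξ in Icc (0:ℝ) a,
                ENNReal.ofReal (Real.exp (2 * Real.sqrt (lam p) * a) * (f p ξ)^2)) :=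
        ENNReal.tsum_le_tsum keyE
    _ = 3 * (∑' p : ℕ, ENNReal.ofReal ((1 + lam p) * (u p a) ^ 2))
        + 3 * (∑' p : ℕ, ENNReal.ofReal ((u' p a) ^ 2))
        + ((3/2 : ℝ≥0∞) * ENNReal.ofReal (lam₁ ^ (-(1:ℝ)/2))) *
            ∑' p : ℕ, ∫⁻ ξ in Icc (0:ℝ) a,
              ENNReal.ofReal (Real.exp (2 * Real.sqrt (lam p) * a) * (f p ξ)^2) := by
        rw [ENNReal.tsum_add, ENNReal.tsum_add, ENNReal.tsum_mul_left, ENNReal.tsum_mul_left,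
          ENNReal.tsum_mul_left]
    _ = 3 * (∑' p : ℕ, ENNReal.ofReal ((1 + lam p) * (u p a) ^ 2))
        + 3 * (∑' p : ℕ, ENNReal.ofReal ((u' p a) ^ 2))
        + (3 / 2 : ℝ≥0∞) * ENNReal.ofReal (lam₁ ^ (-(1 : ℝ) / 2)) *
          ∫⁻ ξ in Icc (0:ℝ) a, ∑' p : ℕ, ENNReal.ofReal
            (Real.exp (2 * Real.sqrt (lam p) * a) * (f p ξ) ^ 2) := by
        rw [← lintegral_tsum hmeas]
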